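/- Let f : ℝⁿ → ℝ ∪ {+∞} be prox-regular at x̄ for 0, and suppose the graphical derivative of the subgradient mapping is nonsingular: [D(∂f)(x̄ | 0)]^{-1}(0) = {0}. Then f satisfies the Kurdyka–Łojasiewicz property at x̄ with exponent ½: there exist μ > 0, ε > 0, and ν > 0 such that d(0, ∂f(x)) ≥ 2μ (max{f(x) − f(x̄), 0})^{1/2} whenever ‖x − x̄‖ ≤ ε and f(x) < f(x̄) + ν. -/

import Mathlib

open Filter Topology
open scoped ENNReal NNReal Pointwise

noncomputable section

abbrev En (n : ℕ) := EuclideanSpace ℝ (Fin n)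

/-- Regular (Fréchet) subgradients of an extended-real-valued function. -/
def RegSubgrad {n : ℕ} (f : En n → EReal) (x : En n) : Set (En n) :=
  {v | ∀ ε : ℝ, 0 < ε → ∃ δ : ℝ, 0 < δ ∧ ∀ u : En n, ‖u - x‖ < δ → u ≠ x →
      f x + (((inner ℝ v (u - x) : ℝ) - ε * ‖u - x‖ : ℝ) : EReal) ≤ f u}

/-- Limiting (Mordukhovich) subgradients. -/
def LimSubgrad {n : ℕ} (f : En n → EReal) (x : En n) : Set (En n) :=
  {v | ∃ xk vk : ℕ → En n,
      Tendsto xk atTop (nhds x) ∧ Tendsto vk atTop (nhds v) ∧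
      Tendsto (fun k => f (xk k)) atTop (nhds (f x)) ∧
      ∀ k, vk k ∈ RegSubgrad f (xk k)}

/-- Outer limiting subgradients: limits of limiting subgradients taken at nearby
points where the function value is strictly larger and converges to `f x`. -/
def OuterSubgrad {n : ℕ} (f : En n → EReal) (x : En n) : Set (En n) :=
  {v | ∃ xk vk : ℕ → En n,
      Tendsto xk atTop (nhds x) ∧ Tendsto vk atTop (nhds v) ∧
      Tendsto (fun k => f (xk k)) atTop (nhds (f x)) ∧
      (∀ k, f x < f (xk k)) ∧ ∀ k, vk k ∈ LimSubgrad f (xk k)}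

/-- Distance from the origin to a set (`∞` for the empty set). -/
def DistZero {n : ℕ} (S : Set (En n)) : ℝ≥0∞ := EMetric.infEdist 0 S

/-- `f` is locally lower semicontinuous at `x`. -/
def LocallyLsc {n : ℕ} (f : En n → EReal) (x : En n) : Prop :=
  ∃ ε : ℝ, 0 < ε ∧ ∀ α : ℝ, (α : EReal) ≤ f x + (ε : ℝ) →
    IsClosed {y : En n | ‖y - x‖ ≤ ε ∧ f y ≤ (α : ℝ)}

/-- Prox-regularity of `f` at `x` for the subgradient `0`, where `c = f x`. -/
def ProxRegularAt {n : ℕ} (f : En n → EReal) (x : En n) (c : ℝ) : Prop :=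
  LocallyLsc f x ∧ (0 : En n) ∈ LimSubgrad f x ∧
    ∃ ε : ℝ, 0 < ε ∧ ∃ ρ : ℝ, 0 ≤ ρ ∧
      ∀ y v : En n, v ∈ LimSubgrad f y → ‖v‖ < ε → ‖y - x‖ < ε →
        f y < (c : ℝ) + (ε : ℝ) →
        ∀ x' : En n, ‖x' - x‖ ≤ ε →
          f y + (((inner ℝ v (x' - y) : ℝ) - ρ / 2 * ‖x' - y‖ ^ 2 : ℝ) : EReal) ≤ f x'

/-- The graphical derivative `D(∂f)(x | 0)` of the subgradient mapping at `(x, 0)`: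
`z ∈ D(∂f)(x|0)(w)` iff `(w, z)` is tangent to `gph ∂f` at `(x, 0)`. -/
def GraphDerivSubdiff {n : ℕ} (f : En n → EReal) (x : En n) (w : En n) : Set (En n) :=
  {z | ∃ (t : ℕ → ℝ) (wk zk : ℕ → En n),
      Tendsto t atTop (nhdsWithin 0 (Set.Ioi 0)) ∧
      Tendsto wk atTop (nhds w) ∧ Tendsto zk atTop (nhds z) ∧
      ∀ k, t k • zk k ∈ LimSubgrad f (x + t k • wk k)}

/-- Nonsingularity of the graphical derivative implies strong metric
subregularity of the subgradient mapping at `(xb, 0)`. -/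
lemma subreg_of_nonsing {n : ℕ} (f : En n → EReal) (xb : En n)
    (hnonsing : ∀ w : En n, (0 : En n) ∈ GraphDerivSubdiff f xb w → w = 0) :
    ∃ κ : ℝ, 0 < κ ∧ ∃ ε₀ : ℝ, 0 < ε₀ ∧ ∀ x : En n, ‖x - xb‖ ≤ ε₀ →
      ∀ v ∈ LimSubgrad f x, ‖x - xb‖ ≤ κ * ‖v‖ := by
  by_contra h
  push_neg at h
  have H : ∀ k : ℕ, ∃ x : En n, ‖x - xb‖ ≤ 1 / (k + 1) ∧
      ∃ v ∈ LimSubgrad f x, (k + 1 : ℝ) * ‖v‖ < ‖x - xb‖ := by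
    intro k
    obtain ⟨x, hx, v, hv, hlt⟩ := h (k + 1) (by positivity) (1 / (k + 1)) (by positivity)
    exact ⟨x, hx, v, hv, hlt⟩
  choose x hx v hv hlt using H
  have ht0 : ∀ k, 0 < ‖x k - xb‖ := by
    intro k
    have := hlt k
    nlinarith [norm_nonneg (v k), norm_nonneg (x k - xb)]
  set t : ℕ → ℝ := fun k => ‖x k - xb‖ with ht_def
  set w : ℕ → En n := fun k => (t k)⁻¹ • (x k - xb) with hw_def
  set z : ℕ → En n := fun k => (t k)⁻¹ • (v k) with hz_def
  have hwnorm : ∀ k, ‖w k‖ = 1 := by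
    intro k
    simp only [hw_def, norm_smul, norm_inv, Real.norm_eq_abs,
      abs_of_pos (ht0 k)]
    rw [show |t k| = t k from abs_of_pos (ht0 k)]; exact inv_mul_cancel₀ (ht0 k).ne'
  have hwsphere : ∀ k, w k ∈ Metric.sphere (0 : En n) 1 := by
    intro k; simp [Metric.mem_sphere, dist_zero_right, hwnorm k]
  obtain ⟨wl, hwl, φ, hφ, hconv⟩ :=
    (isCompact_sphere (0 : En n) 1).tendsto_subseq hwsphere
  -- t tends to 0 within (0, ∞)
  have htlim : Tendsto t atTop (nhdsWithin 0 (Set.Ioi 0)) := by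
    rw [tendsto_nhdsWithin_iff]
    constructor
    · apply squeeze_zero (fun k => (ht0 k).le) (fun k => hx k)
      exact tendsto_one_div_add_atTop_nhds_zero_nat
    · exact Filter.Eventually.of_forall fun k => ht0 k
  have hzlim : Tendsto z atTop (nhds 0) := by
    rw [tendsto_zero_iff_norm_tendsto_zero]
    apply squeeze_zero (fun k => norm_nonneg _) (g := fun k : ℕ => 1 / (k + 1))
    · intro k
      have hk : ‖z k‖ = ‖v k‖ / t k := by
        simp [hz_def, norm_smul, abs_of_pos (ht0 k), div_eq_inv_mul]; exact Or.inl (ht0 k).le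
      rw [hk, div_le_div_iff₀ (ht0 k) (by positivity)]
      have := (hlt k).le
      nlinarith [norm_nonneg (v k)]
    · exact tendsto_one_div_add_atTop_nhds_zero_nat
  have hmem : ∀ k, t k • z k ∈ LimSubgrad f (xb + t k • w k) := by
    intro k
    have h1 : t k • z k = v k := by
      simp [hz_def, smul_smul, mul_inv_cancel₀ (ht0 k).ne']
      rw [mul_inv_cancel₀ (show t k ≠ 0 from (ht0 k).ne'), one_smul]
    have h2 : xb + t k • w k = x k := by
      simp [hw_def, smul_smul, mul_inv_cancel₀ (ht0 k).ne']
      rw [mul_inv_cancel₀ (show t k ≠ 0 from (ht0 k).ne'), one_smul]; abel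
    rw [h1, h2]; exact hv k
  have h0mem : (0 : En n) ∈ GraphDerivSubdiff f xb wl := by
    refine ⟨t ∘ φ, w ∘ φ, z ∘ φ, htlim.comp hφ.tendsto_atTop, hconv,
      hzlim.comp hφ.tendsto_atTop, fun k => hmem (φ k)⟩
  have := hnonsing wl h0mem
  rw [this] at hwl
  simp [Metric.mem_sphere, dist_zero_right] at hwl

/-- prox-regularity at `xb` for `0` together with nonsingularity of
the graphical derivative of `∂f` implies the KŁ property with exponent `1/2`. -/
theorem statement_11 {n : ℕ} (f : En n → EReal) (hbot : ∀ x, f x ≠ ⊥)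
    (xb : En n) (c : ℝ) (hfc : f xb = (c : ℝ))
    (hprox : ProxRegularAt f xb c)
    (hnonsing : ∀ w : En n, (0 : En n) ∈ GraphDerivSubdiff f xb w → w = 0) :
    ∃ μ : ℝ, 0 < μ ∧ ∃ ε : ℝ, 0 < ε ∧ ∃ ν : ℝ, 0 < ν ∧
      ∀ x : En n, ‖x - xb‖ ≤ ε → f x < (c : ℝ) + (ν : ℝ) →
        ENNReal.ofReal (2 * μ * Real.sqrt (max (f x - (c : ℝ)).toReal 0)) ≤
          DistZero (LimSubgrad f x) := by
  obtain ⟨hlsc, h0, ε₁, hε₁, ρ, hρ, hkey⟩ := hprox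
  obtain ⟨κ, hκ, ε₀, hε₀, hsub⟩ := subreg_of_nonsing f xb hnonsing
  set C : ℝ := κ + ρ * κ ^ 2 / 2 with hC_def
  have hC : 0 < C := by positivity
  have hsC : 0 < Real.sqrt C := Real.sqrt_pos.2 hC
  set μ : ℝ := min (1 / (2 * Real.sqrt C)) (Real.sqrt ε₁ / 2) with hμ_def
  have hμ : 0 < μ := lt_min (by positivity) (by positivity)
  refine ⟨μ, hμ, min ε₀ (ε₁ / 2), lt_min hε₀ (by positivity), ε₁, hε₁, ?_⟩
  intro x hxe hfx
  -- the key pointwise bound for every subgradient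
  have hne : f x ≠ ⊤ := by
    intro h
    rw [h] at hfx
    exact absurd hfx (by simp [← EReal.coe_add])
  set r : ℝ := (f x).toReal with hr_def
  have hfr : f x = (r : EReal) := (EReal.coe_toReal hne (hbot x)).symm
  have hrlt : r < c + ε₁ := by
    have := hfx
    rw [hfr, ← EReal.coe_add, EReal.coe_lt_coe_iff] at this
    exact this
  have htor : (f x - (c : ℝ)).toReal = r - c := by
    rw [hfr, ← EReal.coe_sub, EReal.toReal_coe]
  rw [htor]
  set m : ℝ := max (r - c) 0 with hm_def
  have hm0 : 0 ≤ m := le_max_right _ _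
  -- Main claim: every limiting subgradient v at x satisfies 2μ√m ≤ ‖v‖
  have key : ∀ v ∈ LimSubgrad f x, 2 * μ * Real.sqrt m ≤ ‖v‖ := by
    intro v hvmem
    by_cases hbig : ε₁ ≤ ‖v‖
    · -- big subgradient: RHS at least ε₁, LHS at most ε₁
      have hmlt : m ≤ ε₁ := by
        apply max_le (by linarith) hε₁.le
      have h1 : Real.sqrt m ≤ Real.sqrt ε₁ := Real.sqrt_le_sqrt hmlt
      have h2 : 2 * μ ≤ Real.sqrt ε₁ := by
        have : μ ≤ Real.sqrt ε₁ / 2 := min_le_right _ _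
        linarith
      calc 2 * μ * Real.sqrt m ≤ Real.sqrt ε₁ * Real.sqrt ε₁ := by
            apply mul_le_mul h2 h1 (Real.sqrt_nonneg _) (Real.sqrt_nonneg _)
        _ = ε₁ := Real.mul_self_sqrt hε₁.le
        _ ≤ ‖v‖ := hbig
    · push_neg at hbig
      -- apply prox-regularity with x' = xb
      have hxlt : ‖x - xb‖ < ε₁ := by
        have : ‖x - xb‖ ≤ ε₁ / 2 := le_trans hxe (min_le_right _ _)
        linarith
      have hpr := hkey x v hvmem hbig hxlt hfx xb (by simp [hε₁.le])
      rw [hfc, hfr, ← EReal.coe_add, EReal.coe_le_coe_iff] at hpr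
      -- subregularity bound
      have hdk : ‖x - xb‖ ≤ κ * ‖v‖ :=
        hsub x (le_trans hxe (min_le_left _ _)) v hvmem
      -- Cauchy–Schwarz
      have hcs : (inner ℝ v (xb - x) : ℝ) ≥ -(‖v‖ * ‖x - xb‖) := by
        have h1 : (inner ℝ v (x - xb) : ℝ) ≤ ‖v‖ * ‖x - xb‖ :=
          le_trans (real_inner_le_norm v (x - xb)) (by rw [])
        have h2 : (inner ℝ v (xb - x) : ℝ) = -(inner ℝ v (x - xb) : ℝ) := by
          rw [← inner_neg_right]; congr 1; abel
        linarith
      have hnrev : ‖xb - x‖ = ‖x - xb‖ := norm_sub_rev _ _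
      rw [hnrev] at hpr
      -- combine: r - c ≤ C ‖v‖²
      have hrc : r - c ≤ C * ‖v‖ ^ 2 := by
        have hv0 : 0 ≤ ‖v‖ := norm_nonneg v
        have hx0 : 0 ≤ ‖x - xb‖ := norm_nonneg _
        rw [hC_def]
        nlinarith [hpr, hcs, mul_le_mul_of_nonneg_left hdk hv0,
          mul_le_mul_of_nonneg_left (mul_self_le_mul_self hx0 hdk)
            (by positivity : (0:ℝ) ≤ ρ / 2)]
      have hmC : m ≤ C * ‖v‖ ^ 2 := max_le hrc (by positivity)
      have hsm : Real.sqrt m ≤ Real.sqrt C * ‖v‖ := by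
        calc Real.sqrt m ≤ Real.sqrt (C * ‖v‖ ^ 2) := Real.sqrt_le_sqrt hmC
          _ = Real.sqrt C * ‖v‖ := by
              rw [Real.sqrt_mul hC.le, Real.sqrt_sq (norm_nonneg v)]
      have hμC : 2 * μ * Real.sqrt C ≤ 1 := by
        have : μ ≤ 1 / (2 * Real.sqrt C) := min_le_left _ _
        rw [le_div_iff₀ (by positivity)] at this
        linarith
      calc 2 * μ * Real.sqrt m ≤ 2 * μ * (Real.sqrt C * ‖v‖) := by
            apply mul_le_mul_of_nonneg_left hsm (by positivity)
        _ = (2 * μ * Real.sqrt C) * ‖v‖ := by ring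
        _ ≤ 1 * ‖v‖ := mul_le_mul_of_nonneg_right hμC (norm_nonneg v)
        _ = ‖v‖ := one_mul _
  -- conclude via infEdist
  rw [DistZero, EMetric.infEdist, Metric.le_infEDist]
  intro y hy
  rw [edist_dist, dist_zero_left]
  exact ENNReal.ofReal_le_ofReal (key y hy)
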